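/- For r > 0 define Φ_r : ℂ → ℂ by Φ_r(x + iy) = x·cosh r + i·y·sinh r. Given t > 0 and ω ∈ ℂ with Im ω > 0, there exists a unique pair (λ, r) with r > 0 and Re λ > 0 such that 2π·sinh r = t·|ω| and Φ_r(λ) = 2πi·sinh(r)/ω. -/

import Mathlib

theorem stmt_7 (t : ℝ) (ht : 0 < t) (ω : ℂ) (hω : 0 < ω.im) :
    ∃! p : ℂ × ℝ, 0 < p.2 ∧ 0 < p.1.re ∧
      2 * Real.pi * Real.sinh p.2 = t * ‖ω‖ ∧
      ((p.1.re * Real.cosh p.2 : ℝ) : ℂ) + ((p.1.im * Real.sinh p.2 : ℝ) : ℂ) * Complex.I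
        = 2 * Real.pi * Complex.I * (Real.sinh p.2 : ℝ) / ω := by
  have hω0 : ω ≠ 0 := fun h => by simp [h] at hω
  have hωabs : (0:ℝ) < ‖ω‖ := norm_pos_iff.mpr hω0
  have hπ : (0:ℝ) < Real.pi := Real.pi_pos
  set s : ℝ := t * ‖ω‖ / (2 * Real.pi) with hs
  have hspos : 0 < s := by positivity
  set r : ℝ := Real.arsinh s with hrdef
  have hrpos : 0 < r := by
    have := Real.arsinh_pos_iff.2 hspos
    simpa [hrdef] using this
  have hsinh : Real.sinh r = s := Real.sinh_arsinh s
  have h2πsinh : 2 * Real.pi * Real.sinh r = t * ‖ω‖ := by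
    rw [hsinh, hs]; field_simp
  have hch : Real.cosh r ≠ 0 := (Real.cosh_pos (x := r)).ne'
  have hshpos : 0 < Real.sinh r := by rw [hsinh]; exact hspos
  have hsh : Real.sinh r ≠ 0 := hshpos.ne'
  set w : ℂ := 2 * Real.pi * Complex.I * (Real.sinh r : ℝ) / ω with hw
  have hwre : w.re = 2 * Real.pi * Real.sinh r * ω.im / Complex.normSq ω := by
    simp [hw, Complex.div_re, Complex.normSq_apply, Complex.sinh_ofReal_re]
  have hwrepos : 0 < w.re := by
    rw [hwre]
    have hnsq : 0 < Complex.normSq ω := Complex.normSq_pos.2 hω0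
    positivity
  refine ⟨⟨⟨w.re / Real.cosh r, w.im / Real.sinh r⟩, r⟩,
    ⟨hrpos, by positivity, h2πsinh, ?_⟩, ?_⟩
  · show ((w.re / Real.cosh r * Real.cosh r : ℝ) : ℂ)
      + ((w.im / Real.sinh r * Real.sinh r : ℝ) : ℂ) * Complex.I = w
    rw [div_mul_cancel₀ _ hch, div_mul_cancel₀ _ hsh, Complex.re_add_im]
  · rintro ⟨l, r'⟩ ⟨hr', _, heq1, heq2⟩
    have hr'r : r' = r := by
      have : Real.sinh r' = Real.sinh r := by
        have h2 : 2 * Real.pi * Real.sinh r' = 2 * Real.pi * Real.sinh r := by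
          rw [heq1, h2πsinh]
        exact mul_left_cancel₀ (by positivity) h2
      exact Real.sinh_injective this
    subst hr'r
    have heq2' : ((l.re * Real.cosh r : ℝ) : ℂ)
        + ((l.im * Real.sinh r : ℝ) : ℂ) * Complex.I = w := heq2
    have hre : l.re * Real.cosh r = w.re := by
      have := congrArg Complex.re heq2'
      simpa using this
    have him : l.im * Real.sinh r = w.im := by
      have := congrArg Complex.im heq2'
      simpa [Complex.sinh_ofReal_re] using this
    have h1 : l.re = w.re / Real.cosh r := by
      rw [eq_div_iff hch]; exact hre
    have h2 : l.im = w.im / Real.sinh r := by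
      rw [eq_div_iff hsh]; exact him
    refine Prod.ext ?_ rfl
    exact Complex.ext h1 h2
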